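/- Let N be a nonempty finite type with m = |N| elements, let β be a countable type, let P, Q : N → PMF β be families of probability mass functions, let ε ≥ 0, let n₀ ∈ N, and let σ : N → N be a function whose restriction to N \ {n₀} is injective. Suppose that for every n ∈ N with n ≠ n₀, the statistical distance between P(n) and Q(σ(n)) is at most ε. Let P̄ be the uniform mixture (1/m) ∑_{n ∈ N} P(n) and Q̄ the uniform mixture (1/m) ∑_{n ∈ N} Q(n). Then the statistical distance between P̄ and Q̄ is at most ε + 1/m. -/

import Mathlib

/-- Statistical distance between two probability mass functions:
`SD(p, q) = (1/2) * ∑_s |p(s) - q(s)|`. -/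
noncomputable def SD {α : Type*} (p q : PMF α) : ℝ :=
  (1 / 2) * ∑' a, |(p a).toReal - (q a).toReal|

lemma pmf_summable {β : Type*} [Countable β] (p : PMF β) :
    Summable (fun a => (p a).toReal) :=
  ENNReal.summable_toReal (by rw [p.tsum_coe]; exact ENNReal.one_ne_top)

lemma pmf_tsum {β : Type*} [Countable β] (p : PMF β) : ∑' a, (p a).toReal = 1 := by
  rw [← ENNReal.tsum_toReal_eq (fun a => p.apply_ne_top a), p.tsum_coe, ENNReal.toReal_one]

lemma abs_summable {β : Type*} [Countable β] (p q : PMF β) :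
    Summable (fun a => |(p a).toReal - (q a).toReal|) :=
  ((pmf_summable p).sub (pmf_summable q)).abs

lemma abs_tsum_le {β : Type*} [Countable β] (p q : PMF β) :
    ∑' a, |(p a).toReal - (q a).toReal| ≤ 2 := by
  have := Summable.tsum_le_tsum (f := fun a => |(p a).toReal - (q a).toReal|)
    (g := fun a => (p a).toReal + (q a).toReal)
    (fun a => by
      have h1 : (0:ℝ) ≤ (p a).toReal := ENNReal.toReal_nonneg
      have h2 : (0:ℝ) ≤ (q a).toReal := ENNReal.toReal_nonneg
      show |(p a).toReal - (q a).toReal| ≤ (p a).toReal + (q a).toReal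
      rw [abs_sub_le_iff]; constructor <;> linarith)
    (abs_summable p q) ((pmf_summable p).add (pmf_summable q))
  rw [Summable.tsum_add (pmf_summable p) (pmf_summable q), pmf_tsum, pmf_tsum] at this
  linarith

/-- Concluding step of Claim 4.5: if, except for one index `n₀` out of the
`m = |N|` equally likely indices, each component `P n` is `ε`-close to the
unique component `Q (σ n)` (with `σ` injective away from `n₀`), then the
uniform mixtures are `(ε + 1/m)`-close. -/
theorem sd_uniform_mixture_le {N β : Type*} [Fintype N] [Nonempty N] [Countable β]
    (P Q : N → PMF β) (ε : ℝ) (hε : 0 ≤ ε) (n₀ : N) (σ : N → N)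
    (hσ : Set.InjOn σ {n₀}ᶜ)
    (h : ∀ n : N, n ≠ n₀ → SD (P n) (Q (σ n)) ≤ ε) :
    SD ((PMF.uniformOfFintype N).bind P) ((PMF.uniformOfFintype N).bind Q) ≤
      ε + 1 / (Fintype.card N) := by
  classical
  set m := Fintype.card N with hm
  have hm1 : 1 ≤ m := Fintype.card_pos
  have hmR : (0:ℝ) < m := by exact_mod_cast Fintype.card_pos
  -- bind formula
  have hbind : ∀ (R : N → PMF β) (a : β),
      (((PMF.uniformOfFintype N).bind R) a).toReal = (∑ n, (R n a).toReal) / m := by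
    intro R a
    rw [PMF.bind_apply, tsum_fintype]
    rw [ENNReal.toReal_sum (fun n _ => ENNReal.mul_ne_top
      (by simp [PMF.uniformOfFintype_apply]) (PMF.apply_ne_top _ _))]
    simp only [PMF.uniformOfFintype_apply, ENNReal.toReal_mul]
    rw [Finset.sum_div]
    congr 1; ext n
    rw [ENNReal.toReal_inv]
    simp [div_eq_mul_inv, mul_comm, hm]
  -- injectivity on the erase set
  set s : Finset N := Finset.univ.erase n₀ with hs
  have hinj : Set.InjOn σ ↑s := hσ.mono (by
    intro x hx
    simp only [hs, Finset.coe_erase, Set.mem_diff] at hx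
    simpa using hx.2)
  have hcards : s.card = m - 1 := by
    rw [hs, Finset.card_erase_of_mem (Finset.mem_univ _), Finset.card_univ]
  have himg : (s.image σ).card = m - 1 := by
    rw [Finset.card_image_of_injOn hinj, hcards]
  -- find k₀ not in image
  have hss : s.image σ ⊂ Finset.univ := by
    refine Finset.ssubset_univ_iff.mpr ?_
    intro hcontra
    have := himg
    rw [hcontra, Finset.card_univ] at this
    omega
  obtain ⟨k₀, -, hk₀⟩ := Finset.exists_of_ssubset hss
  have huniv : insert k₀ (s.image σ) = Finset.univ := by
    apply Finset.eq_univ_of_card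
    rw [Finset.card_insert_of_notMem hk₀, himg]
    omega
  -- sums decomposition
  have hQsum : ∀ a : β, ∑ k, (Q k a).toReal
      = (Q k₀ a).toReal + ∑ n ∈ s, (Q (σ n) a).toReal := by
    intro a
    rw [← huniv, Finset.sum_insert hk₀, Finset.sum_image (fun x hx y hy => hinj hx hy)]
  have hPsum : ∀ a : β, ∑ n, (P n a).toReal
      = (P n₀ a).toReal + ∑ n ∈ s, (P n a).toReal := by
    intro a
    exact (Finset.add_sum_erase _ _ (Finset.mem_univ n₀)).symm
  -- pointwise bound
  set g : β → ℝ := fun a =>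
    (|(P n₀ a).toReal - (Q k₀ a).toReal|
      + ∑ n ∈ s, |(P n a).toReal - (Q (σ n) a).toReal|) / m with hg
  have hpt : ∀ a, |(((PMF.uniformOfFintype N).bind P) a).toReal
      - (((PMF.uniformOfFintype N).bind Q) a).toReal| ≤ g a := by
    intro a
    rw [hbind, hbind, hQsum, hPsum, div_sub_div_same, hg]
    rw [abs_div, abs_of_pos hmR]
    apply div_le_div_of_nonneg_right ?_ hmR.le |>.trans_eq rfl
    calc |(P n₀ a).toReal + ∑ n ∈ s, (P n a).toReal
        - ((Q k₀ a).toReal + ∑ n ∈ s, (Q (σ n) a).toReal)|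
        = |((P n₀ a).toReal - (Q k₀ a).toReal)
          + ∑ n ∈ s, ((P n a).toReal - (Q (σ n) a).toReal)| := by
          rw [Finset.sum_sub_distrib]; ring_nf
      _ ≤ |(P n₀ a).toReal - (Q k₀ a).toReal|
          + |∑ n ∈ s, ((P n a).toReal - (Q (σ n) a).toReal)| := abs_add_le _ _
      _ ≤ _ := by
          gcongr
          exact Finset.abs_sum_le_sum_abs _ _
  -- summability of g
  have hgsum : Summable g := by
    apply Summable.div_const
    exact (abs_summable (P n₀) (Q k₀)).add
      (summable_sum (fun n _ => abs_summable (P n) (Q (σ n))))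
  -- tsum of g
  have hgt : ∑' a, g a = (∑' a, |(P n₀ a).toReal - (Q k₀ a).toReal|
      + ∑ n ∈ s, ∑' a, |(P n a).toReal - (Q (σ n) a).toReal|) / m := by
    rw [hg]
    rw [tsum_div_const]
    rw [Summable.tsum_add (abs_summable (P n₀) (Q k₀))
      (summable_sum (fun n _ => abs_summable (P n) (Q (σ n))))]
    rw [Summable.tsum_finsetSum (fun n _ => abs_summable (P n) (Q (σ n)))]
  -- bound the tsum of g
  have hgb : ∑' a, g a ≤ (2 + (m - 1 : ℝ) * (2 * ε)) / m := by
    rw [hgt]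
    apply div_le_div_of_nonneg_right ?_ hmR.le |>.trans_eq rfl
    gcongr
    · exact abs_tsum_le _ _
    · calc ∑ n ∈ s, ∑' a, |(P n a).toReal - (Q (σ n) a).toReal|
          ≤ ∑ n ∈ s, 2 * ε := by
            apply Finset.sum_le_sum
            intro n hn
            have hne : n ≠ n₀ := Finset.ne_of_mem_erase hn
            have := h n hne
            rw [SD] at this
            linarith
        _ = (m - 1 : ℝ) * (2 * ε) := by
            rw [Finset.sum_const, hcards, nsmul_eq_mul]
            congr 1
            push_cast [Nat.cast_sub hm1]
            ring
  -- conclude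
  have hSD : SD ((PMF.uniformOfFintype N).bind P) ((PMF.uniformOfFintype N).bind Q)
      ≤ (1/2) * ∑' a, g a := by
    rw [SD]
    exact mul_le_mul_of_nonneg_left (Summable.tsum_le_tsum hpt (abs_summable _ _) hgsum) (by norm_num)
  refine hSD.trans ?_
  have hm1' : (1:ℝ) ≤ m := by exact_mod_cast hm1
  have key : (1:ℝ)/2 * ((2 + ((m:ℝ) - 1) * (2*ε))/(m:ℝ)) ≤ ε + 1/(m:ℝ) := by
    have heq : (1:ℝ)/2 * ((2 + ((m:ℝ) - 1) * (2*ε))/(m:ℝ)) = (1 + ((m:ℝ)-1)*ε)/(m:ℝ) := by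
      ring
    rw [heq, div_le_iff₀ hmR]
    have hinv : (1/(m:ℝ))*(m:ℝ) = 1 := by field_simp
    nlinarith
  calc (1:ℝ)/2 * ∑' a, g a ≤ (1:ℝ)/2 * ((2 + ((m:ℝ) - 1) * (2*ε))/(m:ℝ)) := by linarith
    _ ≤ _ := key
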